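/- Let 1 < α < β and K = {1, α, β}. Then Δ_1(K) is given as follows: (1) if β ≤ 2 then Δ_1(K) = 1; (2) if β > 2, α = 2 and β ≤ 3 then Δ_1(K) = 1; (3) if α = 2 and β > 3 then Δ_1(K) = 3/(2+β); (4) if α ≠ 2 and 2 < β ≤ 1+α then Δ_1(K) = 2/(1+α); (5) if α ≠ 2, 1+α < β ≤ 2α and 2α ≤ β+1 then Δ_1(K) = 1/α; (6) if α ≠ 2, 1+α < β ≤ 2α and 2α > β+1 then Δ_1(K) = 2/(1+β); (7) if α ≠ 2 and 2α < β then Δ_1(K) = 2/(1+β). In each case the value is attained by a periodic K-admissible packing. -/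

import Mathlib

open MeasureTheory Filter Set Metric FourierTransform
open scoped ENNReal

noncomputable section

/-- `d`-dimensional Euclidean space. -/
abbrev Ed (d : ℕ) := EuclideanSpace ℝ (Fin d)

/-- The cube `t·Q_d = [-t/2, t/2]^d`. -/
def cube (d : ℕ) (t : ℝ) : Set (Ed d) := {x | ∀ i, |x i| ≤ t / 2}

/-- The sphere packing `X + (1/2)B_d` with set of centers `X`. -/
def packing (d : ℕ) (X : Set (Ed d)) : Set (Ed d) := ⋃ x ∈ X, closedBall x 2⁻¹

/-- `X` is a set of centers of a packing of unit-diameter spheres: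
distinct centers are at distance at least `1`. -/
def IsPackingCenters (d : ℕ) (X : Set (Ed d)) : Prop :=
  X.Pairwise fun x y => 1 ≤ dist x y

/-- The (upper) density of the packing with set of centers `X`:
`limsup_{t → ∞} vol(P ∩ tQ_d) / vol(tQ_d)`. -/
def dens (d : ℕ) (X : Set (Ed d)) : ℝ≥0∞ :=
  limsup (fun t : ℝ => volume (packing d X ∩ cube d t) / volume (cube d t)) atTop

/-- `X` is the set of centers of a `K`-admissible packing: it is a packing and all
distances between centers lie in `{0} ∪ K ∪ (sup K, ∞)`. -/
def IsAdmissible (d : ℕ) (K : Set ℝ) (X : Set (Ed d)) : Prop :=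
  IsPackingCenters d X ∧
    ∀ x ∈ X, ∀ y ∈ X, dist x y ∈ insert (0 : ℝ) (K ∪ Ioi (sSup K))

/-- `Δ_d(K)`: the supremum of densities of `K`-admissible sphere packings of `ℝ^d`. -/
def packingConst (d : ℕ) (K : Set ℝ) : ℝ≥0∞ :=
  ⨆ (X : Set (Ed d)) (_ : IsAdmissible d K X), dens d X

/-- A periodic set of centers: `X = Λ + Y` for a full-rank lattice `Λ` and a
nonempty finite set `Y`. -/
def IsPeriodic (d : ℕ) (X : Set (Ed d)) : Prop :=
  ∃ (b : Module.Basis (Fin d) ℝ (Ed d)) (Y : Finset (Ed d)), Y.Nonempty ∧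
    X = {x | ∃ l ∈ Submodule.span ℤ (Set.range b), ∃ y ∈ Y, x = l + y}

/-- `Δ_1(K) = v` and the value `v` is attained by a periodic `K`-admissible
packing of `ℝ`. -/
def AttainedValue (K : Set ℝ) (v : ℝ) : Prop :=
  packingConst 1 K = ENNReal.ofReal v ∧
  ∃ X : Set (Ed 1), IsAdmissible 1 K X ∧ IsPeriodic 1 X ∧
    dens 1 X = ENNReal.ofReal v

namespace PackAux
open MeasureTheory Filter Set Metric
open scoped ENNReal

def E1 : Ed 1 ≃ᵐ ℝ :=
  (MeasurableEquiv.toLp 2 (Fin 1 → ℝ)).symm.trans (MeasurableEquiv.funUnique (Fin 1) ℝ)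

lemma E1_apply (x : Ed 1) : E1 x = x 0 := rfl

lemma measurePreserving_E1 : MeasurePreserving E1 volume volume :=
  (volume_preserving_funUnique (Fin 1) ℝ).comp
    (EuclideanSpace.volume_preserving_symm_measurableEquiv_toLp (Fin 1))

lemma vol_preimage (A : Set ℝ) : volume (E1 ⁻¹' A) = volume A :=
  measurePreserving_E1.measure_preimage_emb E1.measurableEmbedding A

lemma dist_eq' (x y : Ed 1) : dist x y = |x 0 - y 0| := by
  rw [EuclideanSpace.dist_eq]
  simp [Fin.sum_univ_one, Real.dist_eq, Real.sqrt_sq_eq_abs]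

def rpack (S : Set ℝ) : Set ℝ := ⋃ s ∈ S, Icc (s - 2⁻¹) (s + 2⁻¹)

def rdens (S : Set ℝ) : ℝ≥0∞ :=
  limsup (fun t : ℝ => volume (rpack S ∩ Icc (-(t/2)) (t/2)) / ENNReal.ofReal t) atTop

lemma cube_eq (t : ℝ) : cube 1 t = E1 ⁻¹' Icc (-(t/2)) (t/2) := by
  ext x
  simp only [cube, mem_setOf_eq, Fin.forall_fin_one, mem_preimage, mem_Icc, E1_apply, abs_le]

lemma closedBall_eq (x : Ed 1) : closedBall x 2⁻¹ = E1 ⁻¹' Icc (x 0 - 2⁻¹) (x 0 + 2⁻¹) := by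
  ext y
  simp only [mem_closedBall, mem_preimage, mem_Icc, E1_apply, dist_eq', abs_le]
  constructor <;> intro h <;> constructor <;> linarith [h.1, h.2]

lemma packing_eq (X : Set (Ed 1)) : packing 1 X = E1 ⁻¹' rpack (E1 '' X) := by
  unfold packing rpack
  rw [biUnion_image, preimage_iUnion₂]
  exact iUnion₂_congr fun x _ => by rw [closedBall_eq, E1_apply]

lemma dens_eq_rdens (X : Set (Ed 1)) : dens 1 X = rdens (E1 '' X) := by
  unfold dens rdens
  congr 1
  funext t
  rw [packing_eq, cube_eq, ← preimage_inter, vol_preimage, vol_preimage, Real.volume_Icc]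
  congr 2
  ring

end PackAux
namespace PackAux
open MeasureTheory Filter Set Metric
open scoped ENNReal

lemma tendsto_ratio (c C : ℝ) :
    Tendsto (fun t : ℝ => ENNReal.ofReal (c*t + C) / ENNReal.ofReal t) atTop
      (nhds (ENNReal.ofReal c)) := by
  have h1 : Tendsto (fun t : ℝ => c + C/t) atTop (nhds c) := by
    have := Tendsto.div_atTop (tendsto_const_nhds (x := C) (f := atTop)) tendsto_id
    simpa using (tendsto_const_nhds (x := c) (f := (atTop : Filter ℝ))).add this
  have h2 := (ENNReal.continuous_ofReal.tendsto c).comp h1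
  apply h2.congr'
  filter_upwards [eventually_gt_atTop 0] with t ht
  have : c + C/t = (c*t + C)/t := by field_simp
  simp only [Function.comp_apply, this, ENNReal.ofReal_div_of_pos ht]

lemma rdens_le_of_vol_le {S : Set ℝ} {c C : ℝ}
    (h : ∀ᶠ t in atTop, volume (rpack S ∩ Icc (-(t/2)) (t/2)) ≤ ENNReal.ofReal (c*t + C)) :
    rdens S ≤ ENNReal.ofReal c := by
  rw [rdens, ← (tendsto_ratio c C).limsup_eq]
  refine limsup_le_limsup ?_ isCobounded_le_of_bot isBounded_le_of_top
  filter_upwards [h] with t ht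
  exact ENNReal.div_le_div_right ht _

lemma ofReal_le_rdens {S : Set ℝ} {c C : ℝ}
    (h : ∀ᶠ t in atTop, ENNReal.ofReal (c*t + C) ≤ volume (rpack S ∩ Icc (-(t/2)) (t/2))) :
    ENNReal.ofReal c ≤ rdens S := by
  rw [rdens, ← (tendsto_ratio c C).limsup_eq]
  refine limsup_le_limsup ?_ isCobounded_le_of_bot isBounded_le_of_top
  filter_upwards [h] with t ht
  exact ENNReal.div_le_div_right ht _

lemma sep_finite {S : Set ℝ} (hsep : S.Pairwise fun a b => 1 ≤ |a - b|) (A B : ℝ) :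
    (S ∩ Icc A B).Finite := by
  have hinj : Set.InjOn Int.floor (S ∩ Icc A B) := by
    intro x hx y hy hxy
    by_contra hne
    have h1 := hsep hx.1 hy.1 hne
    have hx1 := Int.floor_le x
    have hx2 := Int.lt_floor_add_one x
    have hy1 := Int.floor_le y
    have hy2 := Int.lt_floor_add_one y
    rw [hxy] at hx1 hx2
    have h1' : 1 ≤ |x - y| := h1
    have h2' : |x - y| < 1 := abs_sub_lt_iff.mpr ⟨by linarith, by linarith⟩
    linarith
  apply Set.Finite.of_finite_image _ hinj
  apply (Set.finite_Icc ⌊A⌋ ⌊B⌋).subset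
  rintro n ⟨x, hx, rfl⟩
  exact ⟨Int.floor_le_floor hx.2.1, Int.floor_le_floor hx.2.2⟩

end PackAux
namespace PackAux
open MeasureTheory Filter Set Metric
open scoped ENNReal

lemma card_chain_bound {S : Set ℝ} {m : ℕ} (hm : 0 < m) {L : ℝ} (hL : 0 < L)
    (hchain : ∀ f : Fin (m+1) → ℝ, StrictMono f → (∀ i, f i ∈ S) →
      L ≤ f (Fin.last m) - f 0)
    {A B : ℝ} (hAB : A ≤ B) (T : Finset ℝ) (hTS : ∀ x ∈ T, x ∈ S ∩ Set.Icc A B) :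
    (T.card : ℝ) ≤ m * ((B - A) / L) + m := by
  have hm' : (0:ℝ) < m := by exact_mod_cast hm
  have hBA : (0:ℝ) ≤ m * ((B - A) / L) :=
    mul_nonneg (by positivity) (div_nonneg (by linarith) hL.le)
  rcases Nat.eq_zero_or_pos T.card with h0 | hn
  · rw [h0]; push_cast; linarith
  · set n := T.card with hn'
    let e := T.orderIsoOfFin rfl
    have he : ∀ i : Fin n, (e i : ℝ) ∈ S ∩ Set.Icc A B := fun i => hTS _ (e i).2
    have key : ∀ k : ℕ, ∀ h : m * k < n, (k : ℝ) * L ≤ (e ⟨m*k, h⟩ : ℝ) - (e ⟨0, hn⟩ : ℝ) := by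
      intro k
      induction k with
      | zero => intro h; simp
      | succ k ih =>
        intro h
        have hmk : m * (k+1) = m * k + m := by ring
        have h' : m * k < n := by omega
        have hlt : m * k + m < n := by omega
        have ihk := ih h'
        have hidx : ∀ j : Fin (m+1), m * k + (j:ℕ) < n := by
          intro j
          have : (j:ℕ) ≤ m := Nat.lt_succ_iff.mp j.2
          omega
        have hsm : StrictMono (fun j : Fin (m+1) => (e ⟨m*k + (j:ℕ), hidx j⟩ : ℝ)) := by
          intro j j' hj
          have : (⟨m*k + (j:ℕ), hidx j⟩ : Fin n) < ⟨m*k + (j':ℕ), hidx j'⟩ :=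
            Fin.mk_lt_mk.mpr (by have := Fin.lt_def.mp hj; omega)
          exact_mod_cast e.strictMono this
        have hstep := hchain _ hsm (fun j => (he _).1)
        simp only [Fin.val_last, Fin.val_zero, Nat.add_zero] at hstep
        have heq : (⟨m*k + m, hidx (Fin.last m)⟩ : Fin n) = ⟨m*(k+1), h⟩ := by
          ext; simp; ring
        have heq2 : (⟨m*k + 0, hidx 0⟩ : Fin n) = ⟨m*k, h'⟩ := by ext; simp
        rw [heq] at hstep
        push_cast
        have hstep' : L ≤ (e ⟨m*(k+1), h⟩ : ℝ) - (e ⟨m*k, h'⟩ : ℝ) := by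
          convert hstep using 3
        linarith
    have hdm : (n-1)/m * m ≤ n - 1 := Nat.div_mul_le_self (n-1) m
    have hk0 : m * ((n-1)/m) < n := by
      have hcomm : m * ((n-1)/m) = (n-1)/m * m := Nat.mul_comm _ _
      omega
    have h1 := key ((n-1)/m) hk0
    have h2 : ((((n-1)/m : ℕ)) : ℝ) * L ≤ B - A := by
      have ha := (he ⟨m*((n-1)/m), hk0⟩).2
      have hb := (he ⟨0, hn⟩).2
      linarith [ha.2, hb.1]
    have h5 : (((n-1)/m : ℕ) : ℝ) ≤ (B - A)/L := by
      rw [le_div_iff₀ hL]; linarith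
    have h6 : n ≤ m * ((n-1)/m) + m := by
      have hd := Nat.div_add_mod (n-1) m
      have hmod := Nat.mod_lt (n-1) hm
      omega
    have h7 : (n : ℝ) ≤ m * (((n-1)/m : ℕ) : ℝ) + m := by exact_mod_cast h6
    calc (n : ℝ) ≤ m * (((n-1)/m : ℕ) : ℝ) + m := h7
    _ ≤ m * ((B - A)/L) + m := by nlinarith

end PackAux
namespace PackAux
open MeasureTheory Filter Set Metric
open scoped ENNReal

lemma vol_rpack_le {S : Set ℝ} {a b : ℝ} (T : Finset ℝ)
    (hcov : ∀ s ∈ S, s + 2⁻¹ ≥ a → s - 2⁻¹ ≤ b → s ∈ T) :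
    volume (rpack S ∩ Icc a b) ≤ (T.card : ℝ≥0∞) := by
  have hsub : rpack S ∩ Icc a b ⊆ ⋃ s ∈ T, Icc (s - 2⁻¹) (s + 2⁻¹) := by
    rintro x ⟨hx1, hx2⟩
    rw [rpack, mem_iUnion₂] at hx1
    obtain ⟨s, hs, hxs⟩ := hx1
    have := hx2.1; have := hx2.2
    refine mem_iUnion₂.mpr ⟨s, hcov s hs (by rcases hxs with ⟨u,v⟩; rcases hx2 with ⟨p,q⟩; linarith) (by rcases hxs with ⟨u,v⟩; rcases hx2 with ⟨p,q⟩; linarith), hxs⟩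
  calc volume (rpack S ∩ Icc a b) ≤ volume (⋃ s ∈ T, Icc (s - 2⁻¹) (s + 2⁻¹)) :=
        measure_mono hsub
  _ ≤ ∑ s ∈ T, volume (Icc (s - 2⁻¹) (s + 2⁻¹)) := measure_biUnion_finset_le T _
  _ = ∑ s ∈ T, 1 := by
        apply Finset.sum_congr rfl
        intro s _
        rw [Real.volume_Icc]
        norm_num
  _ = (T.card : ℝ≥0∞) := by simp

lemma vol_rpack_ge {S : Set ℝ} (hsep : S.Pairwise fun x y => 1 ≤ |x - y|) {a b : ℝ}
    (T : Finset ℝ) (hT : ∀ s ∈ T, s ∈ S ∧ a ≤ s - 2⁻¹ ∧ s + 2⁻¹ ≤ b) :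
    (T.card : ℝ≥0∞) ≤ volume (rpack S ∩ Icc a b) := by
  have hsub : (⋃ s ∈ T, Ioo (s - 2⁻¹) (s + 2⁻¹)) ⊆ rpack S ∩ Icc a b := by
    rintro x hx
    rw [mem_iUnion₂] at hx
    obtain ⟨s, hs, hxs⟩ := hx
    obtain ⟨hsS, hsa, hsb⟩ := hT s hs
    constructor
    · exact mem_iUnion₂.mpr ⟨s, hsS, ⟨hxs.1.le, hxs.2.le⟩⟩
    · exact ⟨by linarith [hxs.1], by linarith [hxs.2]⟩
  have hdisj : (T : Set ℝ).PairwiseDisjoint (fun s => Ioo (s - 2⁻¹) (s + 2⁻¹)) := by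
    intro s hs s' hs' hne
    have h1 : 1 ≤ |s - s'| := hsep (hT s hs).1 (hT s' hs').1 hne
    rw [Function.onFun]
    rw [Set.disjoint_left]
    intro x hx hx'
    rw [mem_Ioo] at hx hx'
    have : |s - s'| < 1 := abs_lt.mpr ⟨by linarith [hx.2, hx'.1], by linarith [hx.1, hx'.2]⟩
    linarith
  calc (T.card : ℝ≥0∞) = ∑ s ∈ T, volume (Ioo (s - 2⁻¹) (s + 2⁻¹)) := by
        rw [Finset.sum_congr rfl (fun s (_ : s ∈ T) => by
          rw [Real.volume_Ioo]
          norm_num : ∀ s ∈ T, volume (Ioo (s - 2⁻¹) (s + 2⁻¹)) = 1)]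
        simp
  _ = volume (⋃ s ∈ T, Ioo (s - 2⁻¹) (s + 2⁻¹)) :=
        (measure_biUnion_finset hdisj (fun s _ => measurableSet_Ioo)).symm
  _ ≤ volume (rpack S ∩ Icc a b) := measure_mono hsub

lemma rdens_le_general {S : Set ℝ} (hsep : S.Pairwise fun x y => 1 ≤ |x - y|)
    {m : ℕ} (hm : 0 < m) {L : ℝ} (hL : 0 < L)
    (hchain : ∀ f : Fin (m+1) → ℝ, StrictMono f → (∀ i, f i ∈ S) →
      L ≤ f (Fin.last m) - f 0) :
    rdens S ≤ ENNReal.ofReal ((m : ℝ) / L) := by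
  apply rdens_le_of_vol_le (C := (m:ℝ)/L + m)
  filter_upwards [eventually_ge_atTop 0] with t ht
  set a := -(t/2) with ha
  set b := (t/2) with hb
  have hfin : (S ∩ Icc (a - 2⁻¹) (b + 2⁻¹)).Finite := sep_finite hsep _ _
  set T := hfin.toFinset with hT
  have h1 : volume (rpack S ∩ Icc a b) ≤ (T.card : ℝ≥0∞) := by
    apply vol_rpack_le
    intro s hs h2 h3
    rw [hT, Set.Finite.mem_toFinset]
    exact ⟨hs, by constructor <;> linarith⟩
  have h2 : (T.card : ℝ) ≤ m * (((b + 2⁻¹) - (a - 2⁻¹)) / L) + m := by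
    apply card_chain_bound hm hL hchain (by linarith)
    intro x hx
    rw [hT, Set.Finite.mem_toFinset] at hx
    exact hx
  have h3 : (T.card : ℝ) ≤ (m/L) * t + ((m:ℝ)/L + m) := by
    have : (b + 2⁻¹) - (a - 2⁻¹) = t + 1 := by rw [ha, hb]; ring
    rw [this] at h2
    have : (m:ℝ) * ((t+1)/L) + m = (m/L) * t + ((m:ℝ)/L + m) := by field_simp; ring
    linarith [h2, this.le]
  calc volume (rpack S ∩ Icc a b) ≤ (T.card : ℝ≥0∞) := h1
  _ = ENNReal.ofReal (T.card : ℝ) := by simp [ENNReal.ofReal_natCast]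
  _ ≤ ENNReal.ofReal ((m/L) * t + ((m:ℝ)/L + m)) := ENNReal.ofReal_le_ofReal h3

end PackAux
namespace PackAux
open Set

variable {α β : ℝ}

/-- The allowed positive distances. -/
def A (α β : ℝ) : Set ℝ := {1, α, β} ∪ Ioi β

lemma mem_A_cases {d : ℝ} (h : d ∈ A α β) : d = 1 ∨ d = α ∨ d = β ∨ β < d := by
  rcases h with h | h
  · rcases h with h | h | h
    exacts [Or.inl h, Or.inr (Or.inl h), Or.inr (Or.inr (Or.inl h))]
  · exact Or.inr (Or.inr (Or.inr h))

lemma mem_A_of_ge {d : ℝ} (h : β ≤ d) : d ∈ A α β := by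
  rcases eq_or_lt_of_le h with h | h
  · exact Or.inl (Or.inr (Or.inr h.symm))
  · exact Or.inr h

lemma one_mem_A : (1:ℝ) ∈ A α β := Or.inl (Or.inl rfl)
lemma alpha_mem_A : α ∈ A α β := Or.inl (Or.inr (Or.inl rfl))

lemma one_le_of_mem_A (hα : 1 < α) (hβ : α < β) {d : ℝ} (h : d ∈ A α β) : 1 ≤ d := by
  rcases mem_A_cases h with h | h | h | h <;> linarith

lemma small_cases (hβ : 1 < β) {g : ℝ} (m : g ∈ A α β) (hg : g < β) : g = 1 ∨ g = α := by
  rcases mem_A_cases m with h | h | h | h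
  exacts [Or.inl h, Or.inr h, absurd h (by linarith), absurd h (by linarith)]


section chains
variable (hα : 1 < α) (hβ : α < β)
include hα hβ

lemma chain3 (hα2 : α = 2) (h3 : 3 < β) {g1 g2 g3 : ℝ}
    (m1 : g1 ∈ A α β) (m2 : g2 ∈ A α β) (m3 : g3 ∈ A α β)
    (m12 : g1 + g2 ∈ A α β) (m23 : g2 + g3 ∈ A α β) (m123 : g1 + g2 + g3 ∈ A α β) :
    2 + β ≤ g1 + g2 + g3 := by
  subst hα2
  have i1 := one_le_of_mem_A hα hβ m1
  have i2 := one_le_of_mem_A hα hβ m2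
  have i3 := one_le_of_mem_A hα hβ m3
  by_cases c1 : β ≤ g1
  · linarith
  by_cases c2 : β ≤ g2
  · linarith
  by_cases c3 : β ≤ g3
  · linarith
  push_neg at c1 c2 c3
  have e1 := small_cases (by linarith) m1 c1
  have e2 := small_cases (by linarith) m2 c2
  have e3 := small_cases (by linarith) m3 c3
  have no3 : ∀ g : ℝ, g ∈ A 2 β → g ≠ 3 := by
    intro g hg h3'
    rcases mem_A_cases hg with h | h | h | h <;> linarith
  rcases e1 with e1 | e1 <;> rcases e2 with e2 | e2
  · -- g1 = 1, g2 = 1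
    rcases e3 with e3 | e3
    · exact absurd (by linarith : g1+g2+g3 = 3) (no3 _ m123)
    · exact absurd (by linarith : g2+g3 = 3) (no3 _ m23)
  · exact absurd (by linarith : g1+g2 = 3) (no3 _ m12)
  · exact absurd (by linarith : g1+g2 = 3) (no3 _ m12)
  · -- g1 = g2 = 2
    rcases e3 with e3 | e3
    · exact absurd (by linarith : g2+g3 = 3) (no3 _ m23)
    · rcases mem_A_cases m12 with h | h | h | h <;> linarith

lemma chain4 (hα2 : α ≠ 2) (h2 : 2 < β) (h4 : β ≤ 1 + α) {g1 g2 : ℝ}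
    (m1 : g1 ∈ A α β) (m2 : g2 ∈ A α β) (m12 : g1 + g2 ∈ A α β) :
    1 + α ≤ g1 + g2 := by
  have i1 := one_le_of_mem_A hα hβ m1
  have i2 := one_le_of_mem_A hα hβ m2
  by_cases c1 : α ≤ g1
  · linarith
  by_cases c2 : α ≤ g2
  · linarith
  push_neg at c1 c2
  have e1 : g1 = 1 := by
    rcases small_cases (by linarith) m1 (by linarith) with h | h
    exacts [h, absurd h (by linarith)]
  have e2 : g2 = 1 := by
    rcases small_cases (by linarith) m2 (by linarith) with h | h
    exacts [h, absurd h (by linarith)]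
  rcases mem_A_cases m12 with h | h | h | h
  · linarith
  · exact absurd (by linarith : α = 2) hα2
  · linarith
  · linarith

lemma chain5 (hα2 : α ≠ 2) (h1 : 1 + α < β) (h2 : 2*α ≤ β + 1) {g1 g2 : ℝ}
    (m1 : g1 ∈ A α β) (m2 : g2 ∈ A α β) (m12 : g1 + g2 ∈ A α β) :
    2*α ≤ g1 + g2 := by
  have i1 := one_le_of_mem_A hα hβ m1
  have i2 := one_le_of_mem_A hα hβ m2
  by_cases c1 : β ≤ g1
  · linarith
  by_cases c2 : β ≤ g2
  · linarith
  push_neg at c1 c2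
  rcases small_cases (by linarith) m1 c1 with e1 | e1 <;>
    rcases small_cases (by linarith) m2 c2 with e2 | e2
  · rcases mem_A_cases m12 with h | h | h | h
    · linarith
    · exact absurd (by linarith : α = 2) hα2
    · linarith
    · linarith
  · rcases mem_A_cases m12 with h | h | h | h <;> linarith
  · rcases mem_A_cases m12 with h | h | h | h <;> linarith
  · linarith

lemma chain67 (hα2 : α ≠ 2) (h1 : 1 + α < β) (h67 : β + 1 < 2*α ∨ 2*α < β) {g1 g2 : ℝ}
    (m1 : g1 ∈ A α β) (m2 : g2 ∈ A α β) (m12 : g1 + g2 ∈ A α β) :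
    1 + β ≤ g1 + g2 := by
  have i1 := one_le_of_mem_A hα hβ m1
  have i2 := one_le_of_mem_A hα hβ m2
  by_cases c1 : β ≤ g1
  · linarith
  by_cases c2 : β ≤ g2
  · linarith
  push_neg at c1 c2
  rcases small_cases (by linarith) m1 c1 with e1 | e1 <;>
    rcases small_cases (by linarith) m2 c2 with e2 | e2
  · rcases mem_A_cases m12 with h | h | h | h
    · linarith
    · exact absurd (by linarith : α = 2) hα2
    · linarith
    · linarith
  · rcases mem_A_cases m12 with h | h | h | h <;> rcases h67 with h67 | h67 <;> linarith
  · rcases mem_A_cases m12 with h | h | h | h <;> rcases h67 with h67 | h67 <;> linarith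
  · rcases mem_A_cases m12 with h | h | h | h <;> rcases h67 with h67 | h67 <;> linarith

end chains
end PackAux
namespace PackAux
open MeasureTheory Filter Set Metric
open scoped ENNReal

def per (L : ℝ) (Y : Finset ℝ) : Set ℝ := {x | ∃ k : ℤ, ∃ y ∈ Y, x = (k:ℝ) * L + y}

lemma per_dist_form {L D : ℝ} (hLD : D < L) {Y : Finset ℝ}
    (hY : ∀ y ∈ Y, 0 ≤ y ∧ y ≤ D) {a b : ℝ} (ha : a ∈ per L Y) (hb : b ∈ per L Y)
    (hab : a ≠ b) :
    (∃ y₁ ∈ Y, ∃ y₂ ∈ Y, |a - b| = y₁ - y₂ ∧ 0 < y₁ - y₂) ∨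
    (∃ n : ℕ, 1 ≤ n ∧ ∃ y₁ ∈ Y, ∃ y₂ ∈ Y, |a - b| = (n:ℝ) * L + (y₁ - y₂)) := by
  obtain ⟨k₁, y₁, hy₁, rfl⟩ := ha
  obtain ⟨k₂, y₂, hy₂, rfl⟩ := hb
  obtain ⟨hy₁0, hy₁D⟩ := hY y₁ hy₁
  obtain ⟨hy₂0, hy₂D⟩ := hY y₂ hy₂
  have hD0 : 0 ≤ D := le_trans hy₁0 hy₁D
  have hL : 0 < L := lt_of_le_of_lt hD0 hLD
  rcases lt_trichotomy k₁ k₂ with hk | hk | hk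
  · right
    have h1 : (1:ℝ) ≤ ((k₂ - k₁ : ℤ) : ℝ) := by
      have : (1:ℤ) ≤ k₂ - k₁ := by omega
      exact_mod_cast this
    refine ⟨(k₂ - k₁).toNat, by omega, y₂, hy₂, y₁, hy₁, ?_⟩
    have hge : ((k₂:ℝ) * L + y₂) - ((k₁:ℝ) * L + y₁) = ((k₂ - k₁ : ℤ) : ℝ) * L + (y₂ - y₁) := by
      push_cast; ring
    have hpos : 0 < ((k₂:ℝ) * L + y₂) - ((k₁:ℝ) * L + y₁) := by
      rw [hge]; nlinarith
    rw [abs_sub_comm, abs_of_pos hpos, hge]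
    have h2 : (((k₂ - k₁).toNat : ℕ) : ℝ) = ((k₂ - k₁ : ℤ) : ℝ) := by
      rw [← Int.cast_natCast, Int.toNat_of_nonneg (by omega)]
    rw [h2]
  · subst hk
    have hne : y₁ ≠ y₂ := fun h => hab (by rw [h])
    left
    rcases lt_or_gt_of_ne hne with h | h
    · refine ⟨y₂, hy₂, y₁, hy₁, ?_, by linarith⟩
      rw [abs_sub_comm, abs_of_pos (by linarith)]; ring
    · refine ⟨y₁, hy₁, y₂, hy₂, ?_, by linarith⟩
      rw [abs_of_pos (by linarith)]; ring
  · right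
    have h1 : (1:ℝ) ≤ ((k₁ - k₂ : ℤ) : ℝ) := by
      have : (1:ℤ) ≤ k₁ - k₂ := by omega
      exact_mod_cast this
    refine ⟨(k₁ - k₂).toNat, by omega, y₁, hy₁, y₂, hy₂, ?_⟩
    have hge : ((k₁:ℝ) * L + y₁) - ((k₂:ℝ) * L + y₂) = ((k₁ - k₂ : ℤ) : ℝ) * L + (y₁ - y₂) := by
      push_cast; ring
    have hpos : 0 < ((k₁:ℝ) * L + y₁) - ((k₂:ℝ) * L + y₂) := by
      rw [hge]; nlinarith
    rw [abs_of_pos hpos, hge]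
    have h2 : (((k₁ - k₂).toNat : ℕ) : ℝ) = ((k₁ - k₂ : ℤ) : ℝ) := by
      rw [← Int.cast_natCast, Int.toNat_of_nonneg (by omega)]
    rw [h2]

lemma rdens_per {L D : ℝ} (hLD : D < L) (hL : 0 < L) {Y : Finset ℝ} (hYne : Y.Nonempty)
    (hY : ∀ y ∈ Y, 0 ≤ y ∧ y ≤ D)
    (hsep : (per L Y).Pairwise fun x y => 1 ≤ |x - y|) :
    rdens (per L Y) = ENNReal.ofReal ((Y.card : ℝ) / L) := by
  have hD0 : 0 ≤ D := by
    obtain ⟨y, hy⟩ := hYne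
    exact le_trans (hY y hy).1 (hY y hy).2
  set m : ℝ := (Y.card : ℝ) with hm
  have hm0 : 0 < m := by
    rw [hm]; exact_mod_cast Finset.card_pos.mpr hYne
  apply le_antisymm
  · apply rdens_le_of_vol_le (C := m/L + 2*m)
    filter_upwards [eventually_ge_atTop 0] with t ht
    set a := -(t/2) with ha'
    set b := (t/2) with hb'
    set A := a - 2⁻¹ with hA'
    set B := b + 2⁻¹ with hB'
    set k₁ := ⌈(A - L)/L⌉ with hk₁
    set k₂ := ⌊B/L⌋ with hk₂
    set F := ((Finset.Icc k₁ k₂) ×ˢ Y).image (fun p : ℤ × ℝ => (p.1:ℝ) * L + p.2) with hF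
    have hvol : volume (rpack (per L Y) ∩ Icc a b) ≤ (F.card : ℝ≥0∞) := by
      apply vol_rpack_le
      rintro s ⟨k, y, hy, rfl⟩ h1 h2
      obtain ⟨hy0, hyD⟩ := hY y hy
      apply Finset.mem_image.mpr
      refine ⟨(k, y), Finset.mem_product.mpr ⟨Finset.mem_Icc.mpr ⟨?_, ?_⟩, hy⟩, rfl⟩
      · rw [hk₁]
        apply Int.ceil_le.mpr
        rw [div_le_iff₀ hL]
        have : A ≤ (k:ℝ) * L + y := by rw [hA']; linarith
        nlinarith
      · rw [hk₂]
        apply Int.le_floor.mpr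
        rw [le_div_iff₀ hL]
        have : (k:ℝ) * L + y ≤ B := by rw [hB']; linarith
        nlinarith
    have hcard : (F.card : ℝ) ≤ m * ((B - A)/L + 2) := by
      have h1 : F.card ≤ (Finset.Icc k₁ k₂).card * Y.card := by
        calc F.card ≤ ((Finset.Icc k₁ k₂) ×ˢ Y).card := Finset.card_image_le
        _ = _ := Finset.card_product _ _
      have h2 : ((Finset.Icc k₁ k₂).card : ℝ) ≤ (B - A)/L + 2 := by
        rw [Int.card_Icc]
        rcases le_or_gt (k₂ + 1 - k₁) 0 with h | h
        · rw [Int.toNat_of_nonpos h]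
          have : (0:ℝ) ≤ (B - A)/L :=
            div_nonneg (by rw [hA', hB', ha', hb']; linarith) hL.le
          push_cast; linarith
        · have h3 : (((k₂ + 1 - k₁).toNat : ℕ) : ℝ) = ((k₂ + 1 - k₁ : ℤ) : ℝ) := by
            rw [← Int.cast_natCast, Int.toNat_of_nonneg (by omega)]
          rw [h3]
          have h4 : ((k₂:ℝ)) ≤ B/L := Int.floor_le _
          have h5 : (A - L)/L ≤ (k₁:ℝ) := Int.le_ceil _
          have h6 : (A - L)/L = A/L - 1 := by field_simp
          have h7 : (B - A)/L = B/L - A/L := by field_simp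
          push_cast
          linarith
      calc (F.card : ℝ) ≤ ((Finset.Icc k₁ k₂).card : ℝ) * m := by
            rw [hm]; exact_mod_cast h1
      _ ≤ ((B - A)/L + 2) * m := mul_le_mul_of_nonneg_right h2 hm0.le
      _ = m * ((B - A)/L + 2) := by ring
    have hBA : B - A = t + 1 := by rw [hA', hB', ha', hb']; ring
    calc volume (rpack (per L Y) ∩ Icc a b) ≤ (F.card : ℝ≥0∞) := hvol
    _ = ENNReal.ofReal (F.card : ℝ) := by simp
    _ ≤ ENNReal.ofReal ((m/L) * t + (m/L + 2*m)) := by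
        apply ENNReal.ofReal_le_ofReal
        rw [hBA] at hcard
        have h8 : m * ((t+1)/L + 2) = (m/L) * t + (m/L + 2*m) := by field_simp; ring
        linarith
  · apply ofReal_le_rdens (C := -(m/L + 2*m))
    filter_upwards [eventually_ge_atTop 0] with t ht
    set a := -(t/2) with ha'
    set b := (t/2) with hb'
    set k₁ := ⌈(a + 2⁻¹)/L⌉ with hk₁
    set k₂ := ⌊(b - 2⁻¹ - L)/L⌋ with hk₂
    set F := ((Finset.Icc k₁ k₂) ×ˢ Y).image (fun p : ℤ × ℝ => (p.1:ℝ) * L + p.2) with hF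
    have hinj : Set.InjOn (fun p : ℤ × ℝ => (p.1:ℝ) * L + p.2)
        ↑((Finset.Icc k₁ k₂) ×ˢ Y) := by
      rintro ⟨k, y⟩ hk ⟨k', y'⟩ hk' heq
      simp only [Finset.coe_product, Set.mem_prod, Finset.mem_coe, Finset.mem_Icc] at hk hk'
      simp only at heq
      obtain ⟨hy0, hyD⟩ := hY y hk.2
      obtain ⟨hy0', hyD'⟩ := hY y' hk'.2
      have hkk : k = k' := by
        by_contra hne
        have h2 : (1:ℤ) ≤ |k - k'| := Int.one_le_abs (sub_ne_zero.mpr hne)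
        have h1 : (1:ℝ) ≤ |((k:ℝ)) - (k':ℝ)| := by
          calc (1:ℝ) ≤ ((|k - k'| : ℤ) : ℝ) := by exact_mod_cast h2
          _ = |((k:ℝ)) - (k':ℝ)| := by push_cast [Int.cast_abs]; ring_nf
        have h3 : (k:ℝ) * L - (k':ℝ) * L = y' - y := by linarith
        have h4 : |y' - y| < L := abs_lt.mpr ⟨by linarith, by linarith⟩
        have h5 : L ≤ |(k:ℝ) * L - (k':ℝ) * L| := by
          have h6 : (k:ℝ) * L - (k':ℝ) * L = ((k:ℝ) - (k':ℝ)) * L := by ring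
          rw [h6, abs_mul, abs_of_pos hL]
          nlinarith
        rw [h3] at h5
        linarith
      subst hkk
      have : y = y' := by linarith
      simp [this]
    have hT : ∀ s ∈ F, s ∈ per L Y ∧ a ≤ s - 2⁻¹ ∧ s + 2⁻¹ ≤ b := by
      intro s hs
      rw [hF, Finset.mem_image] at hs
      obtain ⟨⟨k, y⟩, hky, rfl⟩ := hs
      rw [Finset.mem_product, Finset.mem_Icc] at hky
      obtain ⟨⟨hkl, hku⟩, hyY⟩ := hky
      obtain ⟨hy0, hyD⟩ := hY y hyY
      have hcl : (a + 2⁻¹)/L ≤ (k:ℝ) := le_trans (Int.le_ceil _) (by exact_mod_cast hkl)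
      have hcu : (k:ℝ) ≤ (b - 2⁻¹ - L)/L := le_trans (by exact_mod_cast hku) (Int.floor_le _)
      have hclL : a + 2⁻¹ ≤ (k:ℝ) * L := by
        rw [div_le_iff₀ hL] at hcl; linarith
      have hcuL : (k:ℝ) * L ≤ b - 2⁻¹ - L := by
        rw [le_div_iff₀ hL] at hcu; linarith
      refine ⟨⟨k, y, hyY, rfl⟩, by simp only; linarith, by simp only; linarith⟩
    have hvol := vol_rpack_ge hsep F hT
    have hIcc : (t - 1)/L - 2 ≤ ((Finset.Icc k₁ k₂).card : ℝ) := by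
      rw [Int.card_Icc]
      have h0 : ((k₂ + 1 - k₁ : ℤ) : ℝ) ≤ (((k₂ + 1 - k₁).toNat : ℕ) : ℝ) := by
        exact_mod_cast Int.self_le_toNat _
      have h4 : (b - 2⁻¹ - L)/L - 1 < (k₂:ℝ) := Int.sub_one_lt_floor _
      have h5 : (k₁:ℝ) < (a + 2⁻¹)/L + 1 := Int.ceil_lt_add_one _
      have h6 : (b - 2⁻¹ - L)/L - (a + 2⁻¹)/L = (t - 1)/L - 1 := by
        rw [ha', hb']; field_simp; ring
      have h7 : ((k₂ + 1 - k₁ : ℤ) : ℝ) = (k₂:ℝ) + 1 - (k₁:ℝ) := by push_cast; ring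
      linarith
    have hFcard : (m/L) * t + -(m/L + 2*m) ≤ (F.card : ℝ) := by
      have h1 : (F.card : ℝ) = ((Finset.Icc k₁ k₂).card : ℝ) * m := by
        rw [hF, Finset.card_image_of_injOn hinj, Finset.card_product]
        push_cast; ring
      rw [h1]
      have h2 : ((t-1)/L - 2) * m ≤ ((Finset.Icc k₁ k₂).card : ℝ) * m :=
        mul_le_mul_of_nonneg_right hIcc hm0.le
      have h3 : ((t-1)/L - 2) * m = (m/L) * t + -(m/L + 2*m) := by field_simp; ring
      linarith
    calc ENNReal.ofReal ((m/L) * t + -(m/L + 2*m)) ≤ ENNReal.ofReal (F.card : ℝ) :=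
          ENNReal.ofReal_le_ofReal hFcard
    _ = (F.card : ℝ≥0∞) := by simp
    _ ≤ volume (rpack (per L Y) ∩ Icc a b) := hvol

end PackAux
namespace PackAux
open MeasureTheory Filter Set Metric
open scoped ENNReal

def ι1 : ℝ ≃ₗ[ℝ] Ed 1 :=
  (LinearEquiv.funUnique (Fin 1) ℝ ℝ).symm.trans
    (WithLp.linearEquiv 2 ℝ (Fin 1 → ℝ)).symm

lemma E1_ι1 (r : ℝ) : E1 (ι1 r) = r := rfl

lemma ι1_apply0 (r : ℝ) : (ι1 r) 0 = r := rfl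

lemma dist_ι1 (a b : ℝ) : dist (ι1 a) (ι1 b) = |a - b| := by
  rw [dist_eq', ι1_apply0, ι1_apply0]

lemma image_E1_ι1 (S : Set ℝ) : E1 '' (ι1 '' S) = S := by
  rw [Set.image_image]
  have h : (fun a : ℝ => E1 (ι1 a)) = id := funext fun a => E1_ι1 a
  rw [h, Set.image_id]

lemma dens_image (S : Set ℝ) : dens 1 (ι1 '' S) = rdens S := by
  rw [dens_eq_rdens, image_E1_ι1]

lemma sSup_K {α β : ℝ} (hα : 1 < α) (hβ : α < β) : sSup ({1, α, β} : Set ℝ) = β := by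
  apply le_antisymm
  · apply csSup_le ⟨1, by simp⟩
    intro x hx
    simp only [Set.mem_insert_iff, Set.mem_singleton_iff] at hx
    rcases hx with rfl | rfl | rfl <;> linarith
  · apply le_csSup
    · refine ⟨β, ?_⟩
      intro x hx
      simp only [Set.mem_insert_iff, Set.mem_singleton_iff] at hx
      rcases hx with rfl | rfl | rfl <;> linarith
    · simp

lemma isAdmissible_image {α β : ℝ} (hα : 1 < α) (hβ : α < β) (S : Set ℝ)
    (h1 : S.Pairwise fun a b => 1 ≤ |a - b|)
    (h2 : ∀ a ∈ S, ∀ b ∈ S, a ≠ b → |a - b| ∈ A α β) :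
    IsAdmissible 1 ({1, α, β} : Set ℝ) (ι1 '' S) := by
  constructor
  · rintro _ ⟨a, ha, rfl⟩ _ ⟨b, hb, rfl⟩ hne
    have hab : a ≠ b := fun h => hne (by rw [h])
    rw [dist_ι1]
    exact h1 ha hb hab
  · rintro _ ⟨a, ha, rfl⟩ _ ⟨b, hb, rfl⟩
    rw [dist_ι1, sSup_K hα hβ]
    by_cases hab : a = b
    · subst hab; simp
    · exact Set.mem_insert_of_mem _ (h2 a ha b hb hab)

lemma adm_transfer {α β : ℝ} (hα : 1 < α) (hβ : α < β) {X : Set (Ed 1)}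
    (h : IsAdmissible 1 ({1, α, β} : Set ℝ) X) :
    ((E1 '' X).Pairwise fun a b => 1 ≤ |a - b|) ∧
      ∀ a ∈ E1 '' X, ∀ b ∈ E1 '' X, a ≠ b → |a - b| ∈ A α β := by
  obtain ⟨hp, hd⟩ := h
  constructor
  · rintro _ ⟨x, hx, rfl⟩ _ ⟨y, hy, rfl⟩ hne
    have hxy : x ≠ y := fun hh => hne (by rw [hh])
    have h1 : 1 ≤ dist x y := hp hx hy hxy
    rwa [dist_eq'] at h1
  · rintro _ ⟨x, hx, rfl⟩ _ ⟨y, hy, rfl⟩ hne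
    have hxy := hd x hx y hy
    rw [dist_eq', sSup_K hα hβ] at hxy
    rcases hxy with h0 | hA
    · exfalso
      apply hne
      have hx0 : x 0 - y 0 = 0 := abs_eq_zero.mp h0
      have : x 0 = y 0 := by linarith
      rw [E1_apply, E1_apply, this]
    · exact hA

lemma isPeriodic_per {L : ℝ} (hL : L ≠ 0) (Y : Finset ℝ) (hYne : Y.Nonempty) :
    IsPeriodic 1 (ι1 '' per L Y) := by
  classical
  refine ⟨((Module.Basis.singleton (Fin 1) ℝ).unitsSMul (fun _ => Units.mk0 L hL)).map ι1,
    Y.image (fun y => ι1 y), hYne.image _, ?_⟩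
  set b := ((Module.Basis.singleton (Fin 1) ℝ).unitsSMul (fun _ => Units.mk0 L hL)).map ι1 with hb
  have hb0 : b 0 = ι1 L := by
    rw [hb]
    rw [Module.Basis.map_apply, Module.Basis.unitsSMul_apply, Module.Basis.singleton_apply]
    norm_num
  have hrange : Set.range b = {ι1 L} := by
    rw [Set.range_unique]
    congr 1
  ext x
  constructor
  · rintro ⟨s, ⟨k, y, hy, rfl⟩, rfl⟩
    refine ⟨k • (ι1 L), ?_, ι1 y, Finset.mem_image_of_mem _ hy, ?_⟩
    · rw [hrange]
      exact Submodule.mem_span_singleton.mpr ⟨k, rfl⟩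
    · rw [← map_zsmul ι1 k L, ← map_add]
      congr 1
      rw [zsmul_eq_mul]
  · rintro ⟨l, hl, _, hy', rfl⟩
    rw [hrange] at hl
    obtain ⟨k, rfl⟩ := Submodule.mem_span_singleton.mp hl
    obtain ⟨y, hy, rfl⟩ := Finset.mem_image.mp hy'
    refine ⟨(k:ℝ) * L + y, ⟨k, y, hy, rfl⟩, ?_⟩
    rw [map_add, ← map_zsmul ι1 k L]
    congr 1
    rw [zsmul_eq_mul]

lemma dens_le_one (X : Set (Ed 1)) : dens 1 X ≤ 1 := by
  rw [dens]
  apply limsup_le_of_le isCobounded_le_of_bot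
  filter_upwards with t
  calc volume (packing 1 X ∩ cube 1 t) / volume (cube 1 t)
      ≤ volume (cube 1 t) / volume (cube 1 t) :=
        ENNReal.div_le_div_right (measure_mono inter_subset_right) _
  _ ≤ 1 := ENNReal.div_self_le_one

lemma packingConst_le {K : Set ℝ} {v : ℝ}
    (h : ∀ X : Set (Ed 1), IsAdmissible 1 K X → dens 1 X ≤ ENNReal.ofReal v) :
    packingConst 1 K ≤ ENNReal.ofReal v := by
  rw [packingConst]
  exact iSup₂_le h

lemma attained_of {K : Set ℝ} {v : ℝ} (X : Set (Ed 1)) (hadm : IsAdmissible 1 K X)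
    (hper : IsPeriodic 1 X) (hdens : dens 1 X = ENNReal.ofReal v)
    (hup : ∀ X' : Set (Ed 1), IsAdmissible 1 K X' → dens 1 X' ≤ ENNReal.ofReal v) :
    AttainedValue K v := by
  refine ⟨le_antisymm (packingConst_le hup) ?_, X, hadm, hper, hdens⟩
  rw [packingConst]
  calc ENNReal.ofReal v = dens 1 X := hdens.symm
  _ ≤ _ := le_iSup₂ (f := fun X (_ : IsAdmissible 1 K X) => dens 1 X) X hadm

lemma pair_chain {α β : ℝ} {S : Set ℝ}
    (hmem : ∀ a ∈ S, ∀ b ∈ S, a ≠ b → |a - b| ∈ A α β)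
    {L : ℝ} (hch : ∀ g1 g2 : ℝ, g1 ∈ A α β → g2 ∈ A α β → g1 + g2 ∈ A α β → L ≤ g1 + g2) :
    ∀ f : Fin 3 → ℝ, StrictMono f → (∀ i, f i ∈ S) → L ≤ f (Fin.last 2) - f 0 := by
  intro f hf hfS
  have h01 : f 0 < f 1 := hf (by decide)
  have h12 : f 1 < f 2 := hf (by decide)
  have m1 : f 1 - f 0 ∈ A α β := by
    have := hmem (f 1) (hfS 1) (f 0) (hfS 0) (ne_of_gt h01)
    rwa [abs_of_pos (by linarith)] at this
  have m2 : f 2 - f 1 ∈ A α β := by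
    have := hmem (f 2) (hfS 2) (f 1) (hfS 1) (ne_of_gt h12)
    rwa [abs_of_pos (by linarith)] at this
  have m12 : (f 1 - f 0) + (f 2 - f 1) ∈ A α β := by
    have := hmem (f 2) (hfS 2) (f 0) (hfS 0) (ne_of_gt (by linarith))
    rw [abs_of_pos (by linarith)] at this
    convert this using 1
    ring
  have := hch _ _ m1 m2 m12
  have hlast : f (Fin.last 2) = f 2 := rfl
  linarith

lemma quad_chain {α β : ℝ} {S : Set ℝ}
    (hmem : ∀ a ∈ S, ∀ b ∈ S, a ≠ b → |a - b| ∈ A α β)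
    {L : ℝ} (hch : ∀ g1 g2 g3 : ℝ, g1 ∈ A α β → g2 ∈ A α β → g3 ∈ A α β →
      g1 + g2 ∈ A α β → g2 + g3 ∈ A α β → g1 + g2 + g3 ∈ A α β → L ≤ g1 + g2 + g3) :
    ∀ f : Fin 4 → ℝ, StrictMono f → (∀ i, f i ∈ S) → L ≤ f (Fin.last 3) - f 0 := by
  intro f hf hfS
  have h01 : f 0 < f 1 := hf (by decide)
  have h12 : f 1 < f 2 := hf (by decide)
  have h23 : f 2 < f 3 := hf (by decide)
  have key : ∀ i j : Fin 4, f i < f j → f j - f i ∈ A α β := by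
    intro i j hij
    have := hmem (f j) (hfS j) (f i) (hfS i) (ne_of_gt hij)
    rwa [abs_of_pos (by linarith)] at this
  have m1 := key 0 1 h01
  have m2 := key 1 2 h12
  have m3 := key 2 3 h23
  have m12 : (f 1 - f 0) + (f 2 - f 1) ∈ A α β := by
    have := key 0 2 (by linarith)
    convert this using 1; ring
  have m23 : (f 2 - f 1) + (f 3 - f 2) ∈ A α β := by
    have := key 1 3 (by linarith)
    convert this using 1; ring
  have m123 : (f 1 - f 0) + (f 2 - f 1) + (f 3 - f 2) ∈ A α β := by
    have := key 0 3 (by linarith)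
    convert this using 1; ring
  have := hch _ _ _ m1 m2 m3 m12 m23 m123
  have hlast : f (Fin.last 3) = f 3 := rfl
  linarith

end PackAux
namespace PackAux
open MeasureTheory Filter Set Metric
open scoped ENNReal

lemma hY0 : ∀ y ∈ ({0} : Finset ℝ), 0 ≤ y ∧ y ≤ 0 := by
  intro y hy
  simp only [Finset.mem_singleton] at hy
  subst hy; norm_num

lemma hY01 : ∀ y ∈ ({0, 1} : Finset ℝ), 0 ≤ y ∧ y ≤ 1 := by
  intro y hy
  simp only [Finset.mem_insert, Finset.mem_singleton] at hy
  rcases hy with rfl | rfl <;> norm_num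

lemma hY012 : ∀ y ∈ ({0, 1, 2} : Finset ℝ), 0 ≤ y ∧ y ≤ 2 := by
  intro y hy
  simp only [Finset.mem_insert, Finset.mem_singleton] at hy
  rcases hy with rfl | rfl | rfl <;> norm_num

lemma dist_per0 {L : ℝ} (hL : 0 < L) {a b : ℝ} (ha : a ∈ per L {0}) (hb : b ∈ per L {0})
    (hab : a ≠ b) : ∃ n : ℕ, 1 ≤ n ∧ |a - b| = (n:ℝ) * L := by
  rcases per_dist_form hL hY0 ha hb hab with ⟨y₁, h₁, y₂, h₂, _, hpos⟩ |
    ⟨n, hn, y₁, h₁, y₂, h₂, heq⟩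
  · simp only [Finset.mem_singleton] at h₁ h₂
    subst h₁; subst h₂; linarith
  · simp only [Finset.mem_singleton] at h₁ h₂
    subst h₁; subst h₂
    exact ⟨n, hn, by rw [heq]; ring⟩

lemma dist_per01 {L : ℝ} (hL : 1 < L) {a b : ℝ} (ha : a ∈ per L ({0,1} : Finset ℝ))
    (hb : b ∈ per L ({0,1} : Finset ℝ)) (hab : a ≠ b) :
    |a - b| = 1 ∨ ∃ n : ℕ, 1 ≤ n ∧ ∃ e : ℝ, (e = -1 ∨ e = 0 ∨ e = 1) ∧
      |a - b| = (n:ℝ) * L + e := by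
  rcases per_dist_form hL hY01 ha hb hab with ⟨y₁, h₁, y₂, h₂, heq, hpos⟩ |
    ⟨n, hn, y₁, h₁, y₂, h₂, heq⟩
  · simp only [Finset.mem_insert, Finset.mem_singleton] at h₁ h₂
    left
    rcases h₁ with rfl | rfl <;> rcases h₂ with rfl | rfl
    · exact absurd hpos (by norm_num)
    · exact absurd hpos (by norm_num)
    · rw [heq]; norm_num
    · exact absurd hpos (by norm_num)
  · simp only [Finset.mem_insert, Finset.mem_singleton] at h₁ h₂
    right
    refine ⟨n, hn, y₁ - y₂, ?_, heq⟩
    rcases h₁ with rfl | rfl <;> rcases h₂ with rfl | rfl <;> norm_num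

lemma dist_per012 {L : ℝ} (hL : 2 < L) {a b : ℝ} (ha : a ∈ per L ({0,1,2} : Finset ℝ))
    (hb : b ∈ per L ({0,1,2} : Finset ℝ)) (hab : a ≠ b) :
    (|a - b| = 1 ∨ |a - b| = 2) ∨ ∃ n : ℕ, 1 ≤ n ∧ ∃ e : ℝ,
      (e = -2 ∨ e = -1 ∨ e = 0 ∨ e = 1 ∨ e = 2) ∧ |a - b| = (n:ℝ) * L + e := by
  rcases per_dist_form hL hY012 ha hb hab with ⟨y₁, h₁, y₂, h₂, heq, hpos⟩ |
    ⟨n, hn, y₁, h₁, y₂, h₂, heq⟩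
  · simp only [Finset.mem_insert, Finset.mem_singleton] at h₁ h₂
    left
    rcases h₁ with rfl | rfl | rfl <;> rcases h₂ with rfl | rfl | rfl
    · exact absurd hpos (by norm_num)
    · exact absurd hpos (by norm_num)
    · exact absurd hpos (by norm_num)
    · left; rw [heq]; norm_num
    · exact absurd hpos (by norm_num)
    · exact absurd hpos (by norm_num)
    · right; rw [heq]; norm_num
    · left; rw [heq]; norm_num
    · exact absurd hpos (by norm_num)
  · simp only [Finset.mem_insert, Finset.mem_singleton] at h₁ h₂
    right
    refine ⟨n, hn, y₁ - y₂, ?_, heq⟩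
    rcases h₁ with rfl | rfl | rfl <;> rcases h₂ with rfl | rfl | rfl <;> norm_num

lemma per0_facts {α β L : ℝ} (h1L : 1 ≤ L)
    (hA : ∀ n : ℕ, 1 ≤ n → (n:ℝ) * L ∈ A α β) :
    ((per L {0}).Pairwise fun a b => 1 ≤ |a - b|) ∧
    (∀ a ∈ per L {0}, ∀ b ∈ per L {0}, a ≠ b → |a - b| ∈ A α β) := by
  have hL : 0 < L := by linarith
  constructor
  · intro a ha b hb hab
    obtain ⟨n, hn, he⟩ := dist_per0 hL ha hb hab
    have hn' : (1:ℝ) ≤ n := by exact_mod_cast hn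
    rw [he]; nlinarith
  · intro a ha b hb hab
    obtain ⟨n, hn, he⟩ := dist_per0 hL ha hb hab
    rw [he]; exact hA n hn

lemma per01_facts {α β L : ℝ} (h2L : 2 ≤ L)
    (hA : ∀ n : ℕ, 1 ≤ n → ∀ e : ℝ, (e = -1 ∨ e = 0 ∨ e = 1) → (n:ℝ) * L + e ∈ A α β) :
    ((per L ({0,1} : Finset ℝ)).Pairwise fun a b => 1 ≤ |a - b|) ∧
    (∀ a ∈ per L ({0,1} : Finset ℝ), ∀ b ∈ per L ({0,1} : Finset ℝ), a ≠ b →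
      |a - b| ∈ A α β) := by
  have hL : 1 < L := by linarith
  constructor
  · intro a ha b hb hab
    rcases dist_per01 hL ha hb hab with h | ⟨n, hn, e, he, h⟩
    · rw [h]
    · have hn' : (1:ℝ) ≤ n := by exact_mod_cast hn
      rw [h]
      rcases he with rfl | rfl | rfl <;> nlinarith
  · intro a ha b hb hab
    rcases dist_per01 hL ha hb hab with h | ⟨n, hn, e, he, h⟩
    · rw [h]; exact one_mem_A
    · rw [h]; exact hA n hn e he

lemma per012_facts {α β L : ℝ} (h3L : 3 ≤ L) (h2A : (2:ℝ) ∈ A α β)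
    (hA : ∀ n : ℕ, 1 ≤ n → ∀ e : ℝ, (e = -2 ∨ e = -1 ∨ e = 0 ∨ e = 1 ∨ e = 2) →
      (n:ℝ) * L + e ∈ A α β) :
    ((per L ({0,1,2} : Finset ℝ)).Pairwise fun a b => 1 ≤ |a - b|) ∧
    (∀ a ∈ per L ({0,1,2} : Finset ℝ), ∀ b ∈ per L ({0,1,2} : Finset ℝ), a ≠ b →
      |a - b| ∈ A α β) := by
  have hL : 2 < L := by linarith
  constructor
  · intro a ha b hb hab
    rcases dist_per012 hL ha hb hab with (h | h) | ⟨n, hn, e, he, h⟩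
    · rw [h]
    · rw [h]; norm_num
    · have hn' : (1:ℝ) ≤ n := by exact_mod_cast hn
      rw [h]
      rcases he with rfl | rfl | rfl | rfl | rfl <;> nlinarith
  · intro a ha b hb hab
    rcases dist_per012 hL ha hb hab with (h | h) | ⟨n, hn, e, he, h⟩
    · rw [h]; exact one_mem_A
    · rw [h]; exact h2A
    · rw [h]; exact hA n hn e he

lemma upper_of_pair {α β : ℝ} (hα : 1 < α) (hβ : α < β) {L : ℝ} (hL : 0 < L)
    (hch : ∀ g1 g2 : ℝ, g1 ∈ A α β → g2 ∈ A α β → g1 + g2 ∈ A α β → L ≤ g1 + g2) :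
    ∀ X : Set (Ed 1), IsAdmissible 1 ({1, α, β} : Set ℝ) X →
      dens 1 X ≤ ENNReal.ofReal (2 / L) := by
  intro X hX
  obtain ⟨hsep, hmem⟩ := adm_transfer hα hβ hX
  rw [dens_eq_rdens]
  have h := rdens_le_general hsep (m := 2) (by norm_num) hL (pair_chain hmem hch)
  convert h using 2; norm_num

lemma upper_of_quad {α β : ℝ} (hα : 1 < α) (hβ : α < β) {L : ℝ} (hL : 0 < L)
    (hch : ∀ g1 g2 g3 : ℝ, g1 ∈ A α β → g2 ∈ A α β → g3 ∈ A α β →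
      g1 + g2 ∈ A α β → g2 + g3 ∈ A α β → g1 + g2 + g3 ∈ A α β → L ≤ g1 + g2 + g3) :
    ∀ X : Set (Ed 1), IsAdmissible 1 ({1, α, β} : Set ℝ) X →
      dens 1 X ≤ ENNReal.ofReal (3 / L) := by
  intro X hX
  obtain ⟨hsep, hmem⟩ := adm_transfer hα hβ hX
  rw [dens_eq_rdens]
  have h := rdens_le_general hsep (m := 3) (by norm_num) hL (quad_chain hmem hch)
  convert h using 2; norm_num

lemma attained_case {α β : ℝ} (hα : 1 < α) (hβ : α < β) {L D v : ℝ} (hLD : D < L)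
    (hL : 0 < L) {Y : Finset ℝ} (hYne : Y.Nonempty) (hY : ∀ y ∈ Y, 0 ≤ y ∧ y ≤ D)
    (hsep : (per L Y).Pairwise fun a b => 1 ≤ |a - b|)
    (hmem : ∀ a ∈ per L Y, ∀ b ∈ per L Y, a ≠ b → |a - b| ∈ A α β)
    (hv : (Y.card : ℝ) / L = v)
    (hup : ∀ X : Set (Ed 1), IsAdmissible 1 ({1, α, β} : Set ℝ) X →
      dens 1 X ≤ ENNReal.ofReal v) :
    AttainedValue ({1, α, β} : Set ℝ) v := by
  apply attained_of (ι1 '' per L Y) (isAdmissible_image hα hβ _ hsep hmem)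
    (isPeriodic_per (ne_of_gt hL) Y hYne) ?_ hup
  rw [dens_image, rdens_per hLD hL hYne hY hsep, hv]

end PackAux

open PackAux in
/-- Lemma `thm:Kalbe`: the exact value of `Δ_1({1, α, β})` for `1 < α < β`,
attained in each case by a periodic packing. -/
theorem packing_const_three_distances
    (α β : ℝ) (hα : 1 < α) (hβ : α < β) (K : Set ℝ) (hK : K = {1, α, β}) :
    (β ≤ 2 → AttainedValue K 1) ∧
    (2 < β → α = 2 → β ≤ 3 → AttainedValue K 1) ∧
    (α = 2 → 3 < β → AttainedValue K (3 / (2 + β))) ∧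
    (α ≠ 2 → 2 < β → β ≤ 1 + α → AttainedValue K (2 / (1 + α))) ∧
    (α ≠ 2 → 1 + α < β → β ≤ 2 * α → 2 * α ≤ β + 1 → AttainedValue K (1 / α)) ∧
    (α ≠ 2 → 1 + α < β → β ≤ 2 * α → β + 1 < 2 * α → AttainedValue K (2 / (1 + β))) ∧
    (α ≠ 2 → 2 * α < β → AttainedValue K (2 / (1 + β))) := by
  
  subst hK
  have hβ1 : 1 < β := lt_trans hα hβ
  refine ⟨?_, ?_, ?_, ?_, ?_, ?_, ?_⟩
  · -- Case 1 : β ≤ 2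
    intro h1
    have hA : ∀ n : ℕ, 1 ≤ n → (n:ℝ) * 1 ∈ A α β := by
      intro n hn
      rw [mul_one]
      rcases Nat.lt_or_ge n 2 with h | h
      · have hn1 : n = 1 := by omega
        subst hn1
        simp only [Nat.cast_one]
        exact one_mem_A
      · apply mem_A_of_ge
        have : (2:ℝ) ≤ n := by exact_mod_cast h
        linarith
    obtain ⟨hsep, hmem⟩ := per0_facts (α := α) (β := β) (L := 1) le_rfl hA
    refine attained_case hα hβ (D := 0) (by norm_num) (by norm_num) ⟨0, by simp⟩ hY0
      hsep hmem (by norm_num) ?_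
    intro X hX
    rw [ENNReal.ofReal_one]
    exact dens_le_one X
  · -- Case 2 : 2 < β, α = 2, β ≤ 3
    intro h2a h2b h2c
    subst h2b
    have hA : ∀ n : ℕ, 1 ≤ n → (n:ℝ) * 1 ∈ A 2 β := by
      intro n hn
      rw [mul_one]
      rcases Nat.lt_or_ge n 2 with h | h
      · have hn1 : n = 1 := by omega
        subst hn1
        simp only [Nat.cast_one]
        exact one_mem_A
      · rcases Nat.lt_or_ge n 3 with h' | h'
        · have hn2 : n = 2 := by omega
          subst hn2
          have : ((2:ℕ):ℝ) = (2:ℝ) := by norm_num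
          rw [this]
          exact alpha_mem_A
        · apply mem_A_of_ge
          have : (3:ℝ) ≤ n := by exact_mod_cast h'
          linarith
    obtain ⟨hsep, hmem⟩ := per0_facts (α := 2) (β := β) (L := 1) le_rfl hA
    refine attained_case hα hβ (D := 0) (by norm_num) (by norm_num) ⟨0, by simp⟩ hY0
      hsep hmem (by norm_num) ?_
    intro X hX
    rw [ENNReal.ofReal_one]
    exact dens_le_one X
  · -- Case 3 : α = 2, 3 < β
    intro h3a h3b
    subst h3a
    have hA : ∀ n : ℕ, 1 ≤ n → ∀ e : ℝ, (e = -2 ∨ e = -1 ∨ e = 0 ∨ e = 1 ∨ e = 2) →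
        (n:ℝ) * (2 + β) + e ∈ A 2 β := by
      intro n hn e he
      have hn' : (1:ℝ) ≤ n := by exact_mod_cast hn
      apply mem_A_of_ge
      rcases he with rfl | rfl | rfl | rfl | rfl <;> nlinarith
    obtain ⟨hsep, hmem⟩ := per012_facts (α := 2) (β := β) (L := 2 + β) (by linarith) alpha_mem_A hA
    refine attained_case hα hβ (D := 2) (by linarith) (by linarith) ⟨0, by simp⟩ hY012
      hsep hmem (by norm_num) ?_
    exact upper_of_quad hα hβ (by linarith)
      (fun g1 g2 g3 m1 m2 m3 m12 m23 m123 =>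
        chain3 hα hβ rfl h3b m1 m2 m3 m12 m23 m123)
  · -- Case 4 : α ≠ 2, 2 < β ≤ 1 + α
    intro h4a h4b h4c
    have hA : ∀ n : ℕ, 1 ≤ n → ∀ e : ℝ, (e = -1 ∨ e = 0 ∨ e = 1) →
        (n:ℝ) * (1 + α) + e ∈ A α β := by
      intro n hn e he
      have hn' : (1:ℝ) ≤ n := by exact_mod_cast hn
      rcases Nat.lt_or_ge n 2 with h | h
      · have hn1 : n = 1 := by omega
        subst hn1
        rcases he with rfl | rfl | rfl
        · have he1 : ((1:ℕ):ℝ) * (1 + α) + (-1) = α := by push_cast; ring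
          rw [he1]
          exact alpha_mem_A
        · apply mem_A_of_ge; push_cast; linarith
        · apply mem_A_of_ge; push_cast; linarith
      · have h2 : (2:ℝ) ≤ n := by exact_mod_cast h
        apply mem_A_of_ge
        rcases he with rfl | rfl | rfl <;> nlinarith
    obtain ⟨hsep, hmem⟩ := per01_facts (α := α) (β := β) (L := 1 + α) (by linarith) hA
    refine attained_case hα hβ (D := 1) (by linarith) (by linarith) ⟨0, by simp⟩ hY01
      hsep hmem (by norm_num) ?_
    exact upper_of_pair hα hβ (by linarith)
      (fun g1 g2 m1 m2 m12 => chain4 hα hβ h4a h4b h4c m1 m2 m12)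
  · -- Case 5 : α ≠ 2, 1 + α < β ≤ 2α, 2α ≤ β + 1
    intro h5a h5b h5c h5d
    have hA : ∀ n : ℕ, 1 ≤ n → (n:ℝ) * α ∈ A α β := by
      intro n hn
      have hn' : (1:ℝ) ≤ n := by exact_mod_cast hn
      rcases Nat.lt_or_ge n 2 with h | h
      · have hn1 : n = 1 := by omega
        subst hn1
        have he1 : ((1:ℕ):ℝ) * α = α := by push_cast; ring
        rw [he1]
        exact alpha_mem_A
      · have h2 : (2:ℝ) ≤ n := by exact_mod_cast h
        apply mem_A_of_ge
        nlinarith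
    obtain ⟨hsep, hmem⟩ := per0_facts (α := α) (β := β) (L := α) (by linarith) hA
    refine attained_case hα hβ (D := 0) (by linarith) (by linarith) ⟨0, by simp⟩ hY0
      hsep hmem (by norm_num) ?_
    intro X hX
    have hval : (2:ℝ) / (2 * α) = 1 / α := by
      rw [div_eq_div_iff (by linarith) (by linarith)]
      ring
    rw [← hval]
    exact upper_of_pair hα hβ (by linarith)
      (fun g1 g2 m1 m2 m12 => chain5 hα hβ h5a h5b h5d m1 m2 m12) X hX
  · -- Case 6 : α ≠ 2, 1 + α < β ≤ 2α, β + 1 < 2α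
    intro h6a h6b h6c h6d
    have hA : ∀ n : ℕ, 1 ≤ n → ∀ e : ℝ, (e = -1 ∨ e = 0 ∨ e = 1) →
        (n:ℝ) * (1 + β) + e ∈ A α β := by
      intro n hn e he
      have hn' : (1:ℝ) ≤ n := by exact_mod_cast hn
      apply mem_A_of_ge
      rcases he with rfl | rfl | rfl <;> nlinarith
    obtain ⟨hsep, hmem⟩ := per01_facts (α := α) (β := β) (L := 1 + β) (by linarith) hA
    refine attained_case hα hβ (D := 1) (by linarith) (by linarith) ⟨0, by simp⟩ hY01
      hsep hmem (by norm_num) ?_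
    exact upper_of_pair hα hβ (by linarith)
      (fun g1 g2 m1 m2 m12 => chain67 hα hβ h6a h6b (Or.inl h6d) m1 m2 m12)
  · -- Case 7 : α ≠ 2, 2α < β
    intro h7a h7b
    have h1 : 1 + α < β := by linarith
    have hA : ∀ n : ℕ, 1 ≤ n → ∀ e : ℝ, (e = -1 ∨ e = 0 ∨ e = 1) →
        (n:ℝ) * (1 + β) + e ∈ A α β := by
      intro n hn e he
      have hn' : (1:ℝ) ≤ n := by exact_mod_cast hn
      apply mem_A_of_ge
      rcases he with rfl | rfl | rfl <;> nlinarith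
    obtain ⟨hsep, hmem⟩ := per01_facts (α := α) (β := β) (L := 1 + β) (by linarith) hA
    refine attained_case hα hβ (D := 1) (by linarith) (by linarith) ⟨0, by simp⟩ hY01
      hsep hmem (by norm_num) ?_
    exact upper_of_pair hα hβ (by linarith)
      (fun g1 g2 m1 m2 m12 => chain67 hα hβ h7a h1 (Or.inr h7b) m1 m2 m12)
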